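/- The ironed virtual value is bounded by the value: for all x in the finite support V_j, the ironed virtual value satisfies φ̃_j(x) ≤ x. -/

import Mathlib

open scoped Classical
open Finset

/-- The `f`-weighted average of `φ` over the values of `V` in the interval `[y, x]`. -/
noncomputable def ironAvg (V : Finset ℝ) (f φ : ℝ → ℝ) (y x : ℝ) : ℝ :=
  (∑ y' ∈ V.filter (fun y' => y ≤ y' ∧ y' ≤ x), f y' * φ y') /
    (∑ y' ∈ V.filter (fun y' => y ≤ y' ∧ y' ≤ x), f y')

/-- The largest `y ∈ V`, `y ≤ x`, maximizing the weighted average `ironAvg V f φ y x`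
(ties broken toward larger values). -/
noncomputable def ironYstar (V : Finset ℝ) (f φ : ℝ → ℝ) (x : ℝ) : ℝ :=
  ((V.filter (fun y => y ≤ x ∧
      ∀ y' ∈ V, y' ≤ x → ironAvg V f φ y' x ≤ ironAvg V f φ y x)).max).unbotD 0

/-- The ironing procedure: starting from the top `x = max V`, find the maximizer
`y* = ironYstar V f φ x`, assign the weighted average `ironAvg V f φ y* x` on
`[y*, x] ∩ V`, and recurse below `y*`.  The fuel `V.card` suffices for termination. -/
noncomputable def ironLoop (V : Finset ℝ) (f φ : ℝ → ℝ) : ℕ → ℝ → ℝ → ℝ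
  | 0, _, _ => 0
  | fuel + 1, x, z =>
      if ironYstar V f φ x ≤ z then ironAvg V f φ (ironYstar V f φ x) x
      else ironLoop V f φ fuel
        (((V.filter (fun y => y < ironYstar V f φ x)).max).unbotD 0) z

/-- Myerson's (discrete) virtual value: `φ(x) = x` if `x = max V`, and otherwise
`φ(x) = x − (succ(x) − x)·(1 − F(x))/f(x)` where `succ(x)` is the smallest element of
`V` above `x` and `1 − F(x) = Pr_{y ∼ f}(y > x)`. -/
noncomputable def virtVal (V : Finset ℝ) (f : ℝ → ℝ) (x : ℝ) : ℝ :=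
  if h : (V.filter (fun y => x < y)).Nonempty then
    x - ((V.filter (fun y => x < y)).min' h - x) *
        (∑ y ∈ V.filter (fun y => x < y), f y) / f x
  else x

/-- The ironed virtual value `φ̃`, produced by running the ironing procedure on
Myerson's virtual value starting from the top `max V`. -/
noncomputable def ironedVirtVal (V : Finset ℝ) (f : ℝ → ℝ) (z : ℝ) : ℝ :=
  ironLoop V f (virtVal V f) V.card ((V.max).unbotD 0) z


lemma max_unbot' (s : Finset ℝ) (h : s.Nonempty) : s.max.unbotD 0 = s.max' h := by
  rw [← Finset.coe_max' h]; rfl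

lemma ironYstar_spec (V : Finset ℝ) (f φ : ℝ → ℝ) (x : ℝ) (h : ∃ w ∈ V, w ≤ x) :
    ironYstar V f φ x ∈ V ∧ ironYstar V f φ x ≤ x ∧
      ∀ y' ∈ V, y' ≤ x → ironAvg V f φ y' x ≤ ironAvg V f φ (ironYstar V f φ x) x := by
  obtain ⟨w, hwV, hwx⟩ := h
  have hW : (V.filter (fun y => y ≤ x)).Nonempty := ⟨w, by simp [hwV, hwx]⟩
  obtain ⟨b, hbW, hb⟩ := (V.filter (fun y => y ≤ x)).exists_max_image
    (fun y => ironAvg V f φ y x) hW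
  simp only [mem_filter] at hbW
  have hbmem : b ∈ V.filter (fun y => y ≤ x ∧
      ∀ y' ∈ V, y' ≤ x → ironAvg V f φ y' x ≤ ironAvg V f φ y x) := by
    simp only [mem_filter]
    exact ⟨hbW.1, hbW.2, fun y' hy' hy'x => hb y' (by simp [hy', hy'x])⟩
  have hne : (V.filter (fun y => y ≤ x ∧
      ∀ y' ∈ V, y' ≤ x → ironAvg V f φ y' x ≤ ironAvg V f φ y x)).Nonempty := ⟨b, hbmem⟩
  have hEq : ironYstar V f φ x = (V.filter (fun y => y ≤ x ∧
      ∀ y' ∈ V, y' ≤ x → ironAvg V f φ y' x ≤ ironAvg V f φ y x)).max' hne :=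
    max_unbot' _ hne
  have hmem := Finset.max'_mem _ hne
  rw [← hEq] at hmem
  simp only [mem_filter] at hmem
  exact ⟨hmem.1, hmem.2.1, hmem.2.2⟩

lemma avg_le (V : Finset ℝ) (f φ : ℝ → ℝ) (hf : ∀ y ∈ V, 0 < f y)
    (hφ : ∀ y ∈ V, φ y ≤ y) (x y z : ℝ) (hzV : z ∈ V) (hyz : y ≤ z) (hzx : z ≤ x)
    (hmax : ∀ y' ∈ V, y' ≤ x → ironAvg V f φ y' x ≤ ironAvg V f φ y x) :
    ironAvg V f φ y x ≤ z := by
  set B := V.filter (fun y' => y ≤ y' ∧ y' ≤ z) with hB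
  set T := V.filter (fun y' => z < y' ∧ y' ≤ x) with hT
  have hunion : B ∪ T = V.filter (fun y' => y ≤ y' ∧ y' ≤ x) := by
    ext a
    simp only [hB, hT, mem_union, mem_filter]
    constructor
    · rintro (⟨haV, h1, h2⟩ | ⟨haV, h1, h2⟩)
      · exact ⟨haV, h1, by linarith⟩
      · exact ⟨haV, by linarith, h2⟩
    · rintro ⟨haV, h1, h2⟩
      by_cases hle : a ≤ z
      · exact Or.inl ⟨haV, h1, hle⟩
      · exact Or.inr ⟨haV, by linarith, h2⟩
  have hdisj : Disjoint B T := by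
    rw [Finset.disjoint_left]
    intro a haB haT
    simp only [hB, hT, mem_filter] at haB haT
    linarith [haB.2.2, haT.2.1]
  have hST : ∀ g : ℝ → ℝ, ∑ y' ∈ V.filter (fun y' => y ≤ y' ∧ y' ≤ x), g y'
      = ∑ y' ∈ B, g y' + ∑ y' ∈ T, g y' := by
    intro g; rw [← hunion, Finset.sum_union hdisj]
  have hzB : z ∈ B := by simp [hB, hzV, hyz]
  have hsBpos : 0 < ∑ y' ∈ B, f y' :=
    Finset.sum_pos (fun i hi => hf i (mem_filter.mp hi).1) ⟨z, hzB⟩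
  have hsTnn : 0 ≤ ∑ y' ∈ T, f y' :=
    Finset.sum_nonneg fun i hi => (hf i (mem_filter.mp hi).1).le
  have hpB : ∑ y' ∈ B, f y' * φ y' ≤ (∑ y' ∈ B, f y') * z := by
    rw [Finset.sum_mul]
    refine Finset.sum_le_sum fun i hi => ?_
    have hiV := (mem_filter.mp hi).1
    have hiz := (mem_filter.mp hi).2.2
    have := hφ i hiV
    nlinarith [hf i hiV]
  rw [ironAvg, hST (fun t => f t * φ t), hST f]
  rcases T.eq_empty_or_nonempty with hTe | hTne
  · rw [hTe]
    simp only [Finset.sum_empty, add_zero]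
    rw [div_le_iff₀ hsBpos]
    linarith
  · set m := T.min' hTne with hm
    have hmT : m ∈ T := Finset.min'_mem _ hTne
    have hmV : m ∈ V := (mem_filter.mp hmT).1
    have hzm : z < m := (mem_filter.mp hmT).2.1
    have hmx : m ≤ x := (mem_filter.mp hmT).2.2
    have hTm : V.filter (fun y' => m ≤ y' ∧ y' ≤ x) = T := by
      ext a
      simp only [hT, mem_filter]
      constructor
      · rintro ⟨haV, h1, h2⟩; exact ⟨haV, by linarith, h2⟩
      · rintro ⟨haV, h1, h2⟩
        exact ⟨haV, Finset.min'_le _ _ (by simp [hT, haV, h1, h2]), h2⟩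
    have hmle := hmax m hmV hmx
    rw [ironAvg, hTm, ironAvg, hST (fun t => f t * φ t), hST f] at hmle
    have hsTpos : 0 < ∑ y' ∈ T, f y' :=
      Finset.sum_pos (fun i hi => hf i (mem_filter.mp hi).1) hTne
    set A := (∑ y' ∈ B, f y' * φ y' + ∑ y' ∈ T, f y' * φ y') /
      (∑ y' ∈ B, f y' + ∑ y' ∈ T, f y') with hA
    have hspos : 0 < ∑ y' ∈ B, f y' + ∑ y' ∈ T, f y' := by linarith
    have h1 : ∑ y' ∈ T, f y' * φ y' ≤ A * ∑ y' ∈ T, f y' := by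
      rw [← div_le_iff₀ hsTpos]; exact hmle
    have h2 : A * (∑ y' ∈ B, f y' + ∑ y' ∈ T, f y')
        = ∑ y' ∈ B, f y' * φ y' + ∑ y' ∈ T, f y' * φ y' := by
      rw [hA, div_mul_cancel₀ _ (ne_of_gt hspos)]
    nlinarith

lemma virtVal_le (V : Finset ℝ) (f : ℝ → ℝ) (hf : ∀ x ∈ V, 0 < f x) :
    ∀ y ∈ V, virtVal V f y ≤ y := by
  intro y hy
  rw [virtVal]
  split_ifs with h
  · have h1 : y < (V.filter (fun t => y < t)).min' h :=
      (mem_filter.mp ((V.filter (fun t => y < t)).min'_mem h)).2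
    have h2 : 0 ≤ ∑ t ∈ V.filter (fun t => y < t), f t :=
      Finset.sum_nonneg fun i hi => (hf i (mem_filter.mp hi).1).le
    have h3 : 0 < f y := hf y hy
    have : 0 ≤ ((V.filter (fun t => y < t)).min' h - y) *
        (∑ t ∈ V.filter (fun t => y < t), f t) / f y := by
      apply div_nonneg _ h3.le
      apply mul_nonneg (by linarith) h2
    linarith
  · exact le_refl y

lemma ironLoop_le (V : Finset ℝ) (f φ : ℝ → ℝ) (hf : ∀ y ∈ V, 0 < f y)
    (hφ : ∀ y ∈ V, φ y ≤ y) :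
    ∀ (fuel : ℕ) (x z : ℝ), z ∈ V → z ≤ x →
      (V.filter (fun y => y ≤ x)).card ≤ fuel → ironLoop V f φ fuel x z ≤ z := by
  intro fuel
  induction fuel with
  | zero =>
    intro x z hz hzx hcard
    exfalso
    have : z ∈ V.filter (fun y => y ≤ x) := by simp [hz, hzx]
    have := Finset.card_pos.mpr ⟨z, this⟩
    omega
  | succ n ih =>
    intro x z hz hzx hcard
    obtain ⟨hyV, hyx, hymax⟩ := ironYstar_spec V f φ x ⟨z, hz, hzx⟩
    rw [ironLoop]
    split_ifs with hyz
    · exact avg_le V f φ hf hφ x _ z hz hyz hzx hymax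
    · push_neg at hyz
      set y := ironYstar V f φ x with hy
      have hzF : z ∈ V.filter (fun w => w < y) := by simp [hz, hyz]
      have hFne : (V.filter (fun w => w < y)).Nonempty := ⟨z, hzF⟩
      have hx' : (V.filter (fun w => w < y)).max.unbotD 0
          = (V.filter (fun w => w < y)).max' hFne := max_unbot' _ hFne
      rw [hx']
      set x' := (V.filter (fun w => w < y)).max' hFne with hx'def
      have hzx' : z ≤ x' := Finset.le_max' _ z hzF
      have hx'y : x' < y := (mem_filter.mp (Finset.max'_mem _ hFne)).2
      have hsub : V.filter (fun w => w ≤ x') ⊆ (V.filter (fun w => w ≤ x)).erase y := by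
        intro a ha
        simp only [mem_filter] at ha
        rw [Finset.mem_erase]
        exact ⟨by linarith, mem_filter.mpr ⟨ha.1, by linarith⟩⟩
      have hyF : y ∈ V.filter (fun w => w ≤ x) := mem_filter.mpr ⟨hyV, hyx⟩
      have hcard' : (V.filter (fun w => w ≤ x')).card ≤ n := by
        have := Finset.card_le_card hsub
        rw [Finset.card_erase_of_mem hyF] at this
        omega
      exact ih x' z hz hzx' hcard'


/-- The ironed virtual value is bounded by the value: for all `x` in
the finite support `V` of the distribution `f`, `φ̃(x) ≤ x`. -/
theorem ironedVirtVal_le_value (V : Finset ℝ) (hV : V.Nonempty) (hVpos : ∀ x ∈ V, 0 ≤ x)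
    (f : ℝ → ℝ) (hf : ∀ x ∈ V, 0 < f x) (hsum : ∑ x ∈ V, f x = 1) :
    ∀ x ∈ V, ironedVirtVal V f x ≤ x := by
  intro x hx
  rw [ironedVirtVal, max_unbot' V hV]
  exact ironLoop_le V f (virtVal V f) hf (virtVal_le V f hf) V.card (V.max' hV) x hx
    (Finset.le_max' V x hx) (by simpa using Finset.card_le_card (Finset.filter_subset _ V))
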